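/- Let θ be a 2×2 real matrix, D* : ℝ² → ℝ² an invertible linear map with D* ∘ θ = θ ∘ D*, ξ ∈ ℝ², and F := {(t,v) ∈ G_θ : D*v = −Λ_t ξ}. For all (t₁,v₁), (t₂,v₂) ∈ G_θ, the right cosets satisfy F·(t₁,v₁) = F·(t₂,v₂) (equivalently (t₁,v₁)·(t₂,v₂)⁻¹ ∈ F) if and only if exp(−t₁θ)D*v₁ − Λ_{−t₁}ξ = exp(−t₂θ)D*v₂ − Λ_{−t₂}ξ. Hence the map π(t,v) := exp(−tθ)D*v − Λ_{−t}ξ identifies the homogeneous space F\G_θ with ℝ². -/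

import Mathlib

open Matrix intervalIntegral

noncomputable section

attribute [local instance] Matrix.linftyOpNormedAddCommGroup Matrix.linftyOpNormedSpace
/-- The matrix exponential of a `2 × 2` real matrix. -/
def expm (A : Matrix (Fin 2) (Fin 2) ℝ) : Matrix (Fin 2) (Fin 2) ℝ := NormedSpace.exp A

/-- `Λ_s = ∫₀ˢ exp(uθ) du`. -/
def Lam (θ : Matrix (Fin 2) (Fin 2) ℝ) (s : ℝ) : Matrix (Fin 2) (Fin 2) ℝ :=
  ∫ u in (0:ℝ)..s, expm (u • θ)

/-- Multiplication of the group `G_θ = ℝ ×_ρ ℝ²`. -/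
def gmul (θ : Matrix (Fin 2) (Fin 2) ℝ) (p q : ℝ × (Fin 2 → ℝ)) : ℝ × (Fin 2 → ℝ) :=
  (p.1 + q.1, p.2 + (expm (p.1 • θ)).mulVec q.2)

/-- Inversion of the group `G_θ`: `(t,v)⁻¹ = (−t, −exp(−tθ)v)`. -/
def ginv (θ : Matrix (Fin 2) (Fin 2) ℝ) (p : ℝ × (Fin 2 → ℝ)) : ℝ × (Fin 2 → ℝ) :=
  (-p.1, -(expm ((-p.1) • θ)).mulVec p.2)

/-- The projection `π(t,v) = exp(−tθ)D*v − Λ_{−t}ξ` of `G_θ` onto `F\G_θ ≅ ℝ²`. -/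
def proj (θ Dstar : Matrix (Fin 2) (Fin 2) ℝ) (ξ : Fin 2 → ℝ) (p : ℝ × (Fin 2 → ℝ)) :
    Fin 2 → ℝ :=
  (expm ((-p.1) • θ)).mulVec (Dstar.mulVec p.2) - (Lam θ (-p.1)).mulVec ξ

attribute [local instance] Matrix.linftyOpNormedRing Matrix.linftyOpNormedAlgebra

lemma expm_mul (θ : Matrix (Fin 2) (Fin 2) ℝ) (s t : ℝ) :
    expm (s • θ) * expm (t • θ) = expm ((s + t) • θ) := by
  rw [expm, expm, expm, add_smul]
  exact (NormedSpace.exp_add_of_commute (((Commute.refl θ).smul_left s).smul_right t)).symm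

lemma expm_zero (θ : Matrix (Fin 2) (Fin 2) ℝ) : expm ((0:ℝ) • θ) = 1 := by
  rw [zero_smul, expm]; exact NormedSpace.exp_zero (𝔸 := Matrix (Fin 2) (Fin 2) ℝ)

lemma expm_cont (θ : Matrix (Fin 2) (Fin 2) ℝ) : Continuous fun u : ℝ => expm (u • θ) :=
  NormedSpace.exp_continuous.comp (continuous_id.smul continuous_const)

lemma expm_intInt (θ : Matrix (Fin 2) (Fin 2) ℝ) (a b : ℝ) :
    @IntervalIntegrable _ (@UniformSpace.toTopologicalSpace _ (@PseudoMetricSpace.toUniformSpace _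
      (@SeminormedAddCommGroup.toPseudoMetricSpace _
        (@NormedAddCommGroup.toSeminormedAddCommGroup _ Matrix.linftyOpNormedAddCommGroup)))) _
      (fun u : ℝ => expm (u • θ)) MeasureTheory.volume a b :=
  (expm_cont θ).intervalIntegrable a b

lemma Lam_add (θ : Matrix (Fin 2) (Fin 2) ℝ) (s t : ℝ) :
    Lam θ (s + t) = Lam θ s + expm (s • θ) * Lam θ t := by
  have h1 : Lam θ (s + t) = Lam θ s + ∫ u in s..(s + t), expm (u • θ) := by
    rw [Lam, Lam, integral_add_adjacent_intervals (expm_intInt θ 0 s) (expm_intInt θ s (s+t))]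
  rw [h1]
  congr 1
  have h2 : (∫ u in (0:ℝ)..t, expm ((u + s) • θ)) = ∫ u in s..(s + t), expm (u • θ) := by
    rw [intervalIntegral.integral_comp_add_right (fun u => expm (u • θ)) s]
    norm_num [add_comm]
  rw [← h2]
  have h3 : (∫ u in (0:ℝ)..t, expm ((u + s) • θ))
      = ∫ u in (0:ℝ)..t, (ContinuousLinearMap.mul ℝ _ (expm (s • θ))) (expm (u • θ)) := by
    congr 1; ext u
    rw [ContinuousLinearMap.mul_apply', expm_mul, add_comm]
  have h4 := (ContinuousLinearMap.mul ℝ (Matrix (Fin 2) (Fin 2) ℝ)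
    (expm (s • θ))).intervalIntegral_comp_comm (expm_intInt θ 0 t)
  rw [h3, h4]
  rfl

lemma Lam_zero (θ : Matrix (Fin 2) (Fin 2) ℝ) : Lam θ 0 = 0 := by
  simp [Lam]

lemma expm_mulVec_inj (θ : Matrix (Fin 2) (Fin 2) ℝ) (s : ℝ) {x y : Fin 2 → ℝ}
    (h : (expm (s • θ)).mulVec x = (expm (s • θ)).mulVec y) : x = y := by
  have := congrArg ((expm ((-s) • θ)).mulVec) h
  rwa [Matrix.mulVec_mulVec, Matrix.mulVec_mulVec, expm_mul, neg_add_cancel, expm_zero,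
    Matrix.one_mulVec, Matrix.one_mulVec] at this

lemma Dstar_comm_expm (θ Dstar : Matrix (Fin 2) (Fin 2) ℝ)
    (hcomm : Dstar * θ = θ * Dstar) (s : ℝ) :
    Dstar * expm (s • θ) = expm (s • θ) * Dstar :=
  ((Commute.smul_right (hcomm : Commute Dstar θ) s).exp_right : _)

theorem coset_aux (θ Dstar : Matrix (Fin 2) (Fin 2) ℝ)
    (hcomm : Dstar * θ = θ * Dstar) (ξ : Fin 2 → ℝ)
    (a b : ℝ) (v w : Fin 2 → ℝ) :
      Dstar.mulVec (v + (expm (a • θ)).mulVec (-(expm ((-b) • θ)).mulVec w))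
          = -(Lam θ (a + -b)).mulVec ξ ↔
        (expm ((-a) • θ)).mulVec (Dstar.mulVec v) - (Lam θ (-a)).mulVec ξ
          = (expm ((-b) • θ)).mulVec (Dstar.mulVec w) - (Lam θ (-b)).mulVec ξ := by
  have hD := Dstar_comm_expm θ Dstar hcomm
  have hM : Lam θ (-b) = Lam θ (-a) + expm ((-a) • θ) * Lam θ (a + -b) := by
    have h := Lam_add θ (-a) (a + -b)
    rw [show -a + (a + -b) = -b by ring] at h
    exact h
  have key : ∀ x y : Fin 2 → ℝ,
      x = y ↔ (expm ((-a) • θ)).mulVec x = (expm ((-a) • θ)).mulVec y :=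
    fun x y => ⟨fun h => by rw [h], fun h => expm_mulVec_inj θ (-a) h⟩
  rw [key]
  have eq1 : (expm ((-a) • θ)).mulVec
        (Dstar.mulVec (v + (expm (a • θ)).mulVec (-(expm ((-b) • θ)).mulVec w)))
      = (expm ((-a) • θ)).mulVec (Dstar.mulVec v)
        - (expm ((-b) • θ)).mulVec (Dstar.mulVec w) := by
    have hmat : expm ((-a) • θ) * (Dstar * (expm (a • θ) * expm ((-b) • θ)))
        = expm ((-b) • θ) * Dstar := by
      rw [← mul_assoc, ← mul_assoc, ← hD (-a), mul_assoc Dstar, expm_mul,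
        neg_add_cancel, expm_zero, mul_one, hD (-b)]
    simp only [Matrix.mulVec_add, Matrix.mulVec_neg, Matrix.mulVec_mulVec, mul_assoc]
    rw [hmat, sub_eq_add_neg]
  have eq2 : (expm ((-a) • θ)).mulVec ((-(Lam θ (a + -b))).mulVec ξ)
      = (Lam θ (-a)).mulVec ξ - (Lam θ (-b)).mulVec ξ := by
    have hm2 : expm ((-a) • θ) * Lam θ (a + -b) = Lam θ (-b) - Lam θ (-a) :=
      (sub_eq_iff_eq_add'.mpr hM).symm
    rw [Matrix.mulVec_mulVec, mul_neg, hm2, neg_sub, ← Matrix.sub_mulVec]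
  rw [eq1, ← Matrix.neg_mulVec, eq2, sub_eq_sub_iff_sub_eq_sub]


/-- Let `D*` be invertible and commute with `θ`, `ξ ∈ ℝ²`, and
`F = {(t,v) : D*v = −Λ_tξ}`.  Two elements of `G_θ` have the same right `F`-coset, i.e.
`(t₁,v₁)·(t₂,v₂)⁻¹ ∈ F`, if and only if `π(t₁,v₁) = π(t₂,v₂)`, where
`π(t,v) = exp(−tθ)D*v − Λ_{−t}ξ`.  Moreover `π` is surjective, so `π` identifies `F\G_θ`
with `ℝ²`. -/
theorem coset_identification (θ Dstar : Matrix (Fin 2) (Fin 2) ℝ)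
    (hunit : IsUnit Dstar) (hcomm : Dstar * θ = θ * Dstar) (ξ : Fin 2 → ℝ) :
    (∀ p q : ℝ × (Fin 2 → ℝ),
      gmul θ p (ginv θ q) ∈
          {r : ℝ × (Fin 2 → ℝ) | Dstar.mulVec r.2 = -(Lam θ r.1).mulVec ξ} ↔
        proj θ Dstar ξ p = proj θ Dstar ξ q) ∧
    Function.Surjective (proj θ Dstar ξ) := by
  constructor
  · intro p q
    simpa only [gmul, ginv, proj, Set.mem_setOf_eq] using
      coset_aux θ Dstar hcomm ξ p.1 q.1 p.2 q.2
  · intro y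
    refine ⟨(0, ((hunit.unit⁻¹ : (Matrix (Fin 2) (Fin 2) ℝ)ˣ) : Matrix (Fin 2) (Fin 2) ℝ).mulVec y), ?_⟩
    have h1 : Dstar * ((hunit.unit⁻¹ : (Matrix (Fin 2) (Fin 2) ℝ)ˣ) : Matrix (Fin 2) (Fin 2) ℝ) = 1 := by
      exact hunit.mul_val_inv
    show expm ((-(0:ℝ)) • θ) *ᵥ (Dstar *ᵥ _) - (Lam θ (-(0:ℝ))) *ᵥ ξ = y
    rw [neg_zero, expm_zero, Lam_zero, Matrix.one_mulVec, Matrix.zero_mulVec, sub_zero,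
      Matrix.mulVec_mulVec, h1, Matrix.one_mulVec]
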